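/- Let a, b ∈ ℝ³ and consider the segment t ↦ a + t·(b − a) for t ∈ [0, 1]. The set of integer lattice cells visited by the segment, namely {(⌊a₁ + t(b₁−a₁)⌋, ⌊a₂ + t(b₂−a₂)⌋, ⌊a₃ + t(b₃−a₃)⌋) : t ∈ [0, 1]}, is finite and has cardinality at most |⌊b₁⌋ − ⌊a₁⌋| + |⌊b₂⌋ − ⌊a₂⌋| + |⌊b₃⌋ − ⌊a₃⌋| + 1. -/
import Mathlib

private lemma eseg_mono (x y t s : ℝ) (hts : t ≤ s) :
    (if x ≤ y then (1:ℤ) else -1) * ⌊x + t * (y - x)⌋ ≤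
    (if x ≤ y then (1:ℤ) else -1) * ⌊x + s * (y - x)⌋ := by
  split_ifs with h
  · simpa using Int.floor_le_floor (by nlinarith)
  · push_neg at h
    simp only [neg_one_mul, neg_le_neg_iff]
    exact Int.floor_le_floor (by nlinarith)

/-- A line segment in `ℝ³` visits only finitely many unit lattice cells, and their number
is at most the sum of the coordinate-wise floor differences plus one. This underlies the
`O(R/d)` bound on the number of cells traversed by a single ray in ray-casting. -/
theorem segment_visits_few_cells (a b : Fin 3 → ℝ) (S : Set (ℤ × ℤ × ℤ))
    (hS : S = {p | ∃ t ∈ Set.Icc (0 : ℝ) 1,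
      p = (⌊a 0 + t * (b 0 - a 0)⌋, ⌊a 1 + t * (b 1 - a 1)⌋, ⌊a 2 + t * (b 2 - a 2)⌋)}) :
    S.Finite ∧
    S.ncard ≤ (⌊b 0⌋ - ⌊a 0⌋).natAbs + (⌊b 1⌋ - ⌊a 1⌋).natAbs + (⌊b 2⌋ - ⌊a 2⌋).natAbs + 1 := by
  set ε : Fin 3 → ℤ := fun i => if a i ≤ b i then 1 else -1 with hεdef
  set f : ℝ → Fin 3 → ℤ := fun t i => ⌊a i + t * (b i - a i)⌋ with hfdef
  have hεne : ∀ i : Fin 3, ε i ≠ 0 := by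
    intro i; simp only [hεdef]; split_ifs <;> decide
  have hmono : ∀ (i : Fin 3) (t s : ℝ), t ≤ s → ε i * f t i ≤ ε i * f s i := by
    intro i t s hts
    exact eseg_mono (a i) (b i) t s hts
  have hf0 : ∀ i : Fin 3, f 0 i = ⌊a i⌋ := by intro i; simp [hfdef]
  have hf1 : ∀ i : Fin 3, f 1 i = ⌊b i⌋ := by
    intro i; simp only [hfdef]; norm_num
  have hεabs : ∀ i : Fin 3, ε i * (⌊b i⌋ - ⌊a i⌋) = ((⌊b i⌋ - ⌊a i⌋).natAbs : ℤ) := by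
    intro i
    rw [← Int.abs_eq_natAbs]
    simp only [hεdef]
    split_ifs with h
    · rw [one_mul, abs_of_nonneg (by exact sub_nonneg.2 (Int.floor_le_floor h))]
    · push_neg at h
      rw [abs_of_nonpos (by exact sub_nonpos.2 (Int.floor_le_floor h.le))]
      ring
  set M : ℤ := ((⌊b 0⌋ - ⌊a 0⌋).natAbs : ℤ) + ((⌊b 1⌋ - ⌊a 1⌋).natAbs : ℤ)
      + ((⌊b 2⌋ - ⌊a 2⌋).natAbs : ℤ) with hMdef
  set F : ℤ × ℤ × ℤ → ℤ := fun p =>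
    ε 0 * (p.1 - ⌊a 0⌋) + ε 1 * (p.2.1 - ⌊a 1⌋) + ε 2 * (p.2.2 - ⌊a 2⌋) with hFdef
  -- F maps S into [0, M]
  have himg : F '' S ⊆ Set.Icc (0 : ℤ) M := by
    rintro z ⟨p, hp, rfl⟩
    rw [hS] at hp
    obtain ⟨t, ht, rfl⟩ := hp
    have hlo : ∀ i : Fin 3, ε i * ⌊a i⌋ ≤ ε i * f t i := by
      intro i
      have := hmono i 0 t ht.1
      rwa [hf0] at this
    have hhi : ∀ i : Fin 3, ε i * f t i ≤ ε i * ⌊b i⌋ := by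
      intro i
      have := hmono i t 1 ht.2
      rwa [hf1] at this
    have e0 := hεabs 0; have e1 := hεabs 1; have e2 := hεabs 2
    have l0 := hlo 0; have l1 := hlo 1; have l2 := hlo 2
    have u0 := hhi 0; have u1 := hhi 1; have u2 := hhi 2
    simp only [hfdef] at l0 l1 l2 u0 u1 u2
    constructor
    · simp only [hFdef, hMdef]
      nlinarith [l0, l1, l2]
    · simp only [hFdef, hMdef]
      nlinarith [u0, u1, u2, e0, e1, e2]
  have hinj : Set.InjOn F S := by
    have key : ∀ t s : ℝ, t ≤ s → t ∈ Set.Icc (0:ℝ) 1 → s ∈ Set.Icc (0:ℝ) 1 →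
        F (f t 0, f t 1, f t 2) = F (f s 0, f s 1, f s 2) →
        ((f t 0, f t 1, f t 2) : ℤ × ℤ × ℤ) = (f s 0, f s 1, f s 2) := by
      intro t s hts _ _ hfeq
      have m0 := hmono 0 t s hts
      have m1 := hmono 1 t s hts
      have m2 := hmono 2 t s hts
      simp only [hFdef] at hfeq
      have e0 : ε 0 * f t 0 = ε 0 * f s 0 := by nlinarith
      have e1 : ε 1 * f t 1 = ε 1 * f s 1 := by nlinarith
      have e2 : ε 2 * f t 2 = ε 2 * f s 2 := by nlinarith
      have := mul_left_cancel₀ (hεne 0) e0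
      have := mul_left_cancel₀ (hεne 1) e1
      have := mul_left_cancel₀ (hεne 2) e2
      simp_all
    intro p hp q hq hpq
    rw [hS] at hp hq
    obtain ⟨t, ht, rfl⟩ := hp
    obtain ⟨s, hs, rfl⟩ := hq
    have hpt : (⌊a 0 + t * (b 0 - a 0)⌋, ⌊a 1 + t * (b 1 - a 1)⌋, ⌊a 2 + t * (b 2 - a 2)⌋)
        = ((f t 0, f t 1, f t 2) : ℤ × ℤ × ℤ) := rfl
    have hps : (⌊a 0 + s * (b 0 - a 0)⌋, ⌊a 1 + s * (b 1 - a 1)⌋, ⌊a 2 + s * (b 2 - a 2)⌋)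
        = ((f s 0, f s 1, f s 2) : ℤ × ℤ × ℤ) := rfl
    rw [hpt, hps] at hpq ⊢
    rcases le_total t s with h | h
    · exact key t s h ht hs hpq
    · exact (key s t h hs ht hpq.symm).symm
  have hfinIcc : (Set.Icc (0 : ℤ) M).Finite := Set.finite_Icc 0 M
  have hfinimg : (F '' S).Finite := hfinIcc.subset himg
  have hfin : S.Finite := Set.Finite.of_finite_image hfinimg hinj
  refine ⟨hfin, ?_⟩
  have hcard : S.ncard = (F '' S).ncard := (Set.ncard_image_of_injOn hinj).symm
  have hle : (F '' S).ncard ≤ (Set.Icc (0 : ℤ) M).ncard :=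
    Set.ncard_le_ncard himg hfinIcc
  have hIcc : (Set.Icc (0 : ℤ) M).ncard
      = (⌊b 0⌋ - ⌊a 0⌋).natAbs + (⌊b 1⌋ - ⌊a 1⌋).natAbs + (⌊b 2⌋ - ⌊a 2⌋).natAbs + 1 := by
    rw [← Finset.coe_Icc, Set.ncard_coe_finset, Int.card_Icc]
    simp only [hMdef]
    omega
  omega
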